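/- Let Ω ⊂ ℝ² be a convex bounded set with nonempty interior, let u ∈ U_Ω attain its maximum value 1 at a point ξ₀ ∈ Ω, and let ũ be the smallest function in U_Ω with ũ(ξ₀) = 1 (the cone function whose graph consists of the segments joining (ξ₀, 1) to ∂Ω × {0}). Then ∫_Ω u_y² dx dy ≥ ∫_Ω ũ_y² dx dy. -/

import Mathlib

open MeasureTheory Real Set Filter Asymptotics

/-- The partial derivative `u_x` (defined via the full derivative; `0` where `u` is
not differentiable). -/
noncomputable def uX (u : ℝ × ℝ → ℝ) (p : ℝ × ℝ) : ℝ := fderiv ℝ u p (1, 0)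

/-- The partial derivative `u_y`. -/
noncomputable def uY (u : ℝ × ℝ → ℝ) (p : ℝ × ℝ) : ℝ := fderiv ℝ u p (0, 1)

/-- Membership in the class `U_Ω`: continuous concave functions on `Ω`, differentiable
almost everywhere, with bounded gradient, vanishing on `∂Ω`. -/
def MemU (Ω : Set (ℝ × ℝ)) (u : ℝ × ℝ → ℝ) : Prop :=
  ContinuousOn u (closure Ω) ∧ ConcaveOn ℝ Ω u ∧
    (∀ᵐ p ∂(volume.restrict Ω), DifferentiableAt ℝ u p) ∧
    (∃ C : ℝ, ∀ p ∈ Ω, DifferentiableAt ℝ u p → ‖fderiv ℝ u p‖ ≤ C) ∧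
    (∀ p ∈ frontier Ω, u p = 0)

/-- `∫_Ω u_x² dx dy`. -/
noncomputable def Ix (Ω : Set (ℝ × ℝ)) (u : ℝ × ℝ → ℝ) : ℝ := ∫ p in Ω, (uX u p) ^ 2

/-- `∫_Ω u_y² dx dy`. -/
noncomputable def Iy (Ω : Set (ℝ × ℝ)) (u : ℝ × ℝ → ℝ) : ℝ := ∫ p in Ω, (uY u p) ^ 2

/-- The abscissa of the left vertical support line of `Ω`. -/
noncomputable def leftX (Ω : Set (ℝ × ℝ)) : ℝ := sInf (Prod.fst '' Ω)

/-- The abscissa of the right vertical support line of `Ω`. -/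
noncomputable def rightX (Ω : Set (ℝ × ℝ)) : ℝ := sSup (Prod.fst '' Ω)

/-- The vertical support line `{x = x₀}` of `Ω`, touching `Ω` at the contact point
`(x₀, p₂)`, is angular: every `(x,y) ∈ Ω` satisfies `|y - p₂| ≤ C|x - x₀|`. -/
def AngularSupportAt (Ω : Set (ℝ × ℝ)) (x₀ : ℝ) : Prop :=
  ∃ p₂ : ℝ, (x₀, p₂) ∈ closure Ω ∧ ∃ C > 0, ∀ q ∈ Ω, |q.2 - p₂| ≤ C * |q.1 - x₀|

/-- The `C¹` norm `sup |u| + sup |u_x| + sup |u_y|`, the suprema over the derivatives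
being taken over the points where they exist. -/
noncomputable def C1Norm (Ω : Set (ℝ × ℝ)) (u : ℝ × ℝ → ℝ) : ℝ :=
  sSup ((fun p => |u p|) '' Ω) +
    sSup ((fun p => |uX u p|) '' {p ∈ Ω | DifferentiableAt ℝ u p}) +
    sSup ((fun p => |uY u p|) '' {p ∈ Ω | DifferentiableAt ℝ u p})

/-- The resistance functional `F(u) = ∫_Ω f(∇u) dx dy`. -/
noncomputable def Fres (Ω : Set (ℝ × ℝ)) (f : ℝ × ℝ → ℝ) (u : ℝ × ℝ → ℝ) : ℝ :=
  ∫ p in Ω, f (uX u p, uY u p)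

/-- The zero function is a local minimum of `F` on `U_Ω` in the `C¹` norm. -/
def ZeroIsLocalMin (Ω : Set (ℝ × ℝ)) (f : ℝ × ℝ → ℝ) : Prop :=
  ∃ δ : ℝ, 0 < δ ∧ ∀ u : ℝ × ℝ → ℝ, MemU Ω u → C1Norm Ω u < δ →
    Fres Ω f (fun _ => 0) ≤ Fres Ω f u

/-- `n` is an outward normal of a support line to `Ω` at `ξ`. -/
def IsSupportDir (Ω : Set (ℝ × ℝ)) (ξ n : ℝ × ℝ) : Prop :=
  n ≠ 0 ∧ ∀ q ∈ Ω, n.1 * q.1 + n.2 * q.2 ≤ n.1 * ξ.1 + n.2 * ξ.2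

/-- `ξ` is a regular boundary point: the support line at `ξ` is unique. -/
def IsRegularPoint (Ω : Set (ℝ × ℝ)) (ξ : ℝ × ℝ) : Prop :=
  ξ ∈ frontier Ω ∧
    ∀ n m : ℝ × ℝ, IsSupportDir Ω ξ n → IsSupportDir Ω ξ m → ∃ t : ℝ, m = t • n

/-- `ξ` is a singular boundary point: `Ω` has more than one support line at `ξ`. -/
def IsSingularPoint (Ω : Set (ℝ × ℝ)) (ξ : ℝ × ℝ) : Prop :=
  ξ ∈ frontier Ω ∧
    ∃ n m : ℝ × ℝ, IsSupportDir Ω ξ n ∧ IsSupportDir Ω ξ m ∧ ¬∃ t : ℝ, m = t • n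


lemma ftc_lip {K : NNReal} {D : ℝ → ℝ} (hD : LipschitzWith K D) {d : ℝ → ℝ}
    {α β : ℝ} (hαβ : α ≤ β)
    (hae : ∀ᵐ y ∂(volume.restrict (Set.Ioo α β)), HasDerivAt D (d y) y) :
    ∫ y in Set.Ioo α β, d y = D β - D α := by
  have hDc : Continuous D := hD.continuous
  set h : ℕ → ℝ := fun n => 1 / (n + 1) with hh
  have hpos : ∀ n, 0 < h n := fun n => by positivity
  have hh0 : Tendsto h atTop (nhds 0) := tendsto_one_div_add_atTop_nhds_zero_nat
  set q : ℕ → ℝ → ℝ := fun n y => (D (y + h n) - D y) / h n with hq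
  -- pointwise convergence
  have hptwise : ∀ᵐ y ∂(volume.restrict (Set.Ioo α β)),
      Tendsto (fun n => q n y) atTop (nhds (d y)) := by
    filter_upwards [hae] with y hy
    have h1 : Tendsto (fun n => y + h n) atTop (nhdsWithin y {y}ᶜ) := by
      apply tendsto_nhdsWithin_of_tendsto_nhds_of_eventually_within
      · simpa using tendsto_const_nhds.add hh0
      · filter_upwards with n
        simp only [Set.mem_compl_iff, Set.mem_singleton_iff]
        intro hcon
        nlinarith [hpos n, congrArg (· - y) hcon]
    have h2 := (hasDerivAt_iff_tendsto_slope.mp hy).comp h1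
    convert h2 using 2 with n
    simp [hq, slope, Function.comp]
    ring
  -- uniform bound
  have hbound : ∀ n, ∀ y : ℝ, |q n y| ≤ (K : ℝ) := by
    intro n y
    have := hD.dist_le_mul (y + h n) y
    rw [Real.dist_eq, Real.dist_eq] at this
    rw [hq]
    simp only []
    rw [abs_div]
    rw [div_le_iff₀ (by simpa using abs_pos.mpr (hpos n).ne')]
    · calc |D (y + h n) - D y| ≤ K * |y + h n - y| := this
        _ = K * |h n| := by ring_nf
  have hfin : IsFiniteMeasure (volume.restrict (Set.Ioo α β)) :=
    ⟨by rw [Measure.restrict_apply_univ]; exact measure_Ioo_lt_top⟩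
  have hDCT : Tendsto (fun n => ∫ y in Set.Ioo α β, q n y) atTop
      (nhds (∫ y in Set.Ioo α β, d y)) := by
    apply tendsto_integral_of_dominated_convergence (fun _ => (K : ℝ))
    · intro n
      exact (((hDc.comp (continuous_id.add continuous_const)).sub hDc).div_const
        _).aestronglyMeasurable
    · exact integrable_const _
    · intro n
      filter_upwards with y
      simpa using hbound n y
    · exact hptwise
  have hIoo_eq : ∀ f : ℝ → ℝ, ∫ y in Set.Ioo α β, f y = ∫ y in α..β, f y := fun f => by
    rw [intervalIntegral.integral_of_le hαβ, integral_Ioc_eq_integral_Ioo]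
  have hcomp : ∀ n, ∫ y in Set.Ioo α β, q n y
      = (∫ y in β..(β + h n), D y) / h n - (∫ y in α..(α + h n), D y) / h n := by
    intro n
    rw [hIoo_eq]
    have i1 : IntervalIntegrable (fun y => D (y + h n)) volume α β :=
      (hDc.comp (continuous_id.add continuous_const)).intervalIntegrable _ _
    have i2 : IntervalIntegrable D volume α β := hDc.intervalIntegrable _ _
    have e1 : ∫ y in α..β, q n y
        = ((∫ y in α..β, D (y + h n)) - ∫ y in α..β, D y) / h n := by
      rw [← intervalIntegral.integral_sub i1 i2, ← intervalIntegral.integral_div]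
    rw [e1, intervalIntegral.integral_comp_add_right]
    have split1 : (∫ y in (α + h n)..(β + h n), D y)
        = (∫ y in (α + h n)..β, D y) + ∫ y in β..(β + h n), D y :=
      (intervalIntegral.integral_add_adjacent_intervals (hDc.intervalIntegrable _ _)
        (hDc.intervalIntegrable _ _)).symm
    have split2 : (∫ y in α..β, D y)
        = (∫ y in α..(α + h n), D y) + ∫ y in (α + h n)..β, D y :=
      (intervalIntegral.integral_add_adjacent_intervals (hDc.intervalIntegrable _ _)
        (hDc.intervalIntegrable _ _)).symm
    rw [split1, split2]; ring
  have hend : ∀ c : ℝ, Tendsto (fun n => (∫ y in c..(c + h n), D y) / h n) atTop (nhds (D c)) := by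
    intro c
    rw [tendsto_iff_dist_tendsto_zero]
    apply squeeze_zero (g := fun n => (K : ℝ) * h n) (fun n => dist_nonneg)
    · intro n
      have hb : ∀ y ∈ Set.uIoc c (c + h n), ‖D y - D c‖ ≤ (K : ℝ) * h n := by
        intro y hy
        rw [Set.uIoc_of_le (by linarith [hpos n])] at hy
        have hK := hD.dist_le_mul y c
        rw [Real.dist_eq, Real.dist_eq] at hK
        refine hK.trans (mul_le_mul_of_nonneg_left ?_ K.2)
        rw [abs_le]
        constructor
        · linarith [hy.1, hpos n]
        · linarith [hy.2]
      have hmain := intervalIntegral.norm_integral_le_of_norm_le_const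
        (C := (K : ℝ) * h n) (f := fun y => D y - D c)
        (a := c) (b := c + h n) hb
      have hsub : (∫ y in c..(c + h n), (D y - D c)) = (∫ y in c..(c + h n), D y) - h n * D c := by
        rw [intervalIntegral.integral_sub (hDc.intervalIntegrable _ _) intervalIntegrable_const,
          intervalIntegral.integral_const]
        simp [smul_eq_mul]
      rw [hsub] at hmain
      have habs : |c + h n - c| = h n := by
        rw [add_sub_cancel_left]; exact abs_of_pos (hpos n)
      rw [habs] at hmain
      have hrw : (∫ y in c..(c + h n), D y) / h n - D c
          = ((∫ y in c..(c + h n), D y) - h n * D c) / h n := by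
        rw [sub_div, mul_div_cancel_left₀ _ (hpos n).ne']
      rw [Real.dist_eq, hrw, abs_div, abs_of_pos (hpos n), div_le_iff₀ (hpos n)]
      exact hmain
    · simpa using tendsto_const_nhds.mul hh0
  have hlim2 : Tendsto (fun n => ∫ y in Set.Ioo α β, q n y) atTop (nhds (D β - D α)) := by
    simp only [hcomp]
    exact (hend β).sub (hend α)
  exact tendsto_nhds_unique hDCT hlim2

section SliceKey

variable {C : ℝ} {K : NNReal} {G D g d : ℝ → ℝ} {a b : ℝ}

lemma slice_key (hC : 0 ≤ C)
    (hG : LipschitzWith K G) (hDlip : LipschitzWith K D) (hab : a < b)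
    (hGconc : ConcaveOn ℝ (Set.Ioo a b) G)
    (hD0 : ∀ y ∈ Set.Ioo a b, 0 ≤ D y) (hDa : D a = 0) (hDb : D b = 0)
    (hgm : Measurable g) (hdm : Measurable d)
    (hae : ∀ᵐ y ∂(volume.restrict (Set.Ioo a b)),
      HasDerivAt G (g y) y ∧ HasDerivAt D (d y) y ∧ |g y| ≤ C ∧ |d y| ≤ C) :
    0 ≤ ∫ y in Set.Ioo a b, g y * d y := by
  set P : ℝ → Prop := fun s =>
    HasDerivAt G (g s) s ∧ HasDerivAt D (d s) s ∧ |g s| ≤ C ∧ |d s| ≤ C with hP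
  have hae' : ∀ᵐ s ∂(volume : Measure ℝ), s ∈ Set.Ioo a b → P s :=
    (ae_restrict_iff' measurableSet_Ioo).mp hae
  -- the key estimate for each n
  have key : ∀ n : ℕ, -(4 * C * C * ((b - a) / (n + 1))) ≤ ∫ y in Set.Ioo a b, g y * d y := by
    intro n
    set N : ℕ := n + 1 with hN
    set Δ : ℝ := (b - a) / N with hΔ
    have hNpos : (0:ℝ) < (N:ℝ) := by exact_mod_cast Nat.succ_pos n
    have hΔpos : 0 < Δ := div_pos (by linarith) hNpos
    set y : ℕ → ℝ := fun i => a + i * Δ with hy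
    have hy0 : y 0 = a := by simp [hy]
    have hyN : y N = b := by
      show a + ((N:ℕ):ℝ) * ((b - a) / (N:ℕ)) = b
      rw [mul_div_assoc', mul_div_cancel_left₀ _ hNpos.ne']
      ring
    have hymono : StrictMono y := by
      intro i j hij
      simp only [hy]
      have : (i : ℝ) < j := by exact_mod_cast hij
      nlinarith
    have hyIcc : ∀ i, i ≤ N → y i ∈ Set.Icc a b := by
      intro i hi
      constructor
      · rw [← hy0]; exact hymono.monotone (Nat.zero_le i)
      · rw [← hyN]; exact hymono.monotone hi
    have hsub : ∀ i, i < N → Set.Ioo (y i) (y (i + 1)) ⊆ Set.Ioo a b := by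
      intro i hi s hs
      exact ⟨lt_of_le_of_lt (hyIcc i (le_of_lt hi)).1 hs.1,
        lt_of_lt_of_le hs.2 (hyIcc (i + 1) hi).2⟩
    -- pick good points
    have hpick : ∀ i, i < N → ∃ s, s ∈ Set.Ioo (y i) (y (i + 1)) ∧ P s := by
      intro i hi
      by_contra hcon
      push_neg at hcon
      have hsubnull : Set.Ioo (y i) (y (i + 1)) ⊆ {s | ¬(s ∈ Set.Ioo a b → P s)} := by
        intro s hs
        exact fun himp => hcon s hs (himp (hsub i hi hs))
      have h0 : volume {s | ¬(s ∈ Set.Ioo a b → P s)} = 0 := ae_iff.mp hae'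
      have h1 : volume (Set.Ioo (y i) (y (i + 1))) = 0 := measure_mono_null hsubnull h0
      rw [Real.volume_Ioo] at h1
      have h2 : y i < y (i + 1) := hymono (Nat.lt_succ_self i)
      rw [ENNReal.ofReal_eq_zero] at h1
      linarith
    choose! t ht hPt using hpick
    have htab : ∀ i, i < N → t i ∈ Set.Ioo a b := fun i hi => hsub i hi (ht i hi)
    -- antitonicity of g at good points
    have gpt : ∀ p q : ℝ, p ∈ Set.Ioo a b → q ∈ Set.Ioo a b → p < q → P p → P q →
        g q ≤ g p := by
      intro p q hp hq hpq hPp hPq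
      calc g q ≤ slope G p q := hGconc.le_slope_of_hasDerivAt hp hq hpq hPq.1
        _ ≤ g p := hGconc.slope_le_of_hasDerivAt hp hq hpq hPp.1
    set ub : ℕ → ℝ := fun i => if i = 0 then C else g (t (i - 1)) with hub
    set lb : ℕ → ℝ := fun i => if i = n then -C else g (t (i + 1)) with hlb
    have hbd : ∀ i, i < N → ∀ s, s ∈ Set.Ioo (y i) (y (i + 1)) → P s →
        lb i ≤ g s ∧ g s ≤ ub i := by
      intro i hi s hs hPs
      have hsab : s ∈ Set.Ioo a b := hsub i hi hs
      constructor
      · by_cases h0 : i = n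
        · simp only [hlb, h0, if_pos rfl]
          exact (abs_le.mp hPs.2.2.1).1
        · have hi1 : i + 1 < N := by omega
          have h2 : s < t (i + 1) := lt_trans hs.2 (ht (i + 1) hi1).1
          have := gpt s (t (i + 1)) hsab (htab (i + 1) hi1) h2 hPs (hPt (i + 1) hi1)
          simpa [hlb, h0] using this
      · by_cases h0 : i = 0
        · simp only [hub, h0, if_pos rfl]
          exact (abs_le.mp hPs.2.2.1).2
        · have hi1 : i - 1 < N := by omega
          have heq : i - 1 + 1 = i := by omega
          have h2 : t (i - 1) < s := by
            have := (ht (i - 1) hi1).2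
            rw [heq] at this
            exact lt_trans this hs.1
          have := gpt (t (i - 1)) s (htab (i - 1) hi1) hsab h2 (hPt (i - 1) hi1) hPs
          simpa [hub, h0] using this
    -- finiteness and integrability on subintervals
    have hfin : ∀ (α β : ℝ), volume (Set.Ioo α β) < ⊤ := by
      intro α β; rw [Real.volume_Ioo]; exact ENNReal.ofReal_lt_top
    have haeP : ∀ i, i < N → ∀ᵐ s ∂(volume.restrict (Set.Ioo (y i) (y (i + 1)))),
        s ∈ Set.Ioo (y i) (y (i + 1)) ∧ P s := by
      intro i hi
      filter_upwards [ae_restrict_mem measurableSet_Ioo, ae_restrict_of_ae hae'] with s h1 h2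
      exact ⟨h1, h2 (hsub i hi h1)⟩
    have hvol : ∀ i, (volume (Set.Ioo (y i) (y (i + 1)))).toReal = Δ := by
      intro i
      rw [Real.volume_Ioo]
      have : y (i + 1) - y i = Δ := by simp [hy]; push_cast; ring
      rw [this, ENNReal.toReal_ofReal hΔpos.le]
    have hint_gd : ∀ i, i < N →
        IntegrableOn (fun s => g s * d s) (Set.Ioo (y i) (y (i + 1))) volume := by
      intro i hi
      refine Integrable.mono' (g := fun _ => C * C)
        (integrableOn_const (hfin _ _).ne)
        ((hgm.mul hdm).aestronglyMeasurable) ?_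
      filter_upwards [haeP i hi] with s hs
      rw [Real.norm_eq_abs, abs_mul]
      exact mul_le_mul hs.2.2.2.1 hs.2.2.2.2 (abs_nonneg _) hC
    have hint_d : ∀ i, i < N → IntegrableOn d (Set.Ioo (y i) (y (i + 1))) volume := by
      intro i hi
      refine Integrable.mono' (g := fun _ => C)
        (integrableOn_const (hfin _ _).ne) hdm.aestronglyMeasurable ?_
      filter_upwards [haeP i hi] with s hs
      exact hs.2.2.2.2
    have hint_sub : ∀ i, i < N →
        IntegrableOn (fun s => (g s - g (t i)) * d s) (Set.Ioo (y i) (y (i + 1))) volume := by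
      intro i hi
      refine Integrable.mono' (g := fun _ => (C + C) * C)
        (integrableOn_const (hfin _ _).ne)
        (((hgm.sub measurable_const).mul hdm).aestronglyMeasurable) ?_
      filter_upwards [haeP i hi] with s hs
      rw [Real.norm_eq_abs, abs_mul]
      have h1 : |g s - g (t i)| ≤ C + C := by
        have := hs.2.2.2.1
        have h2 := (hPt i hi).2.2.1
        rw [abs_le] at *
        constructor <;> [linarith [this.1, h2.2]; linarith [this.2, h2.1]]
      exact mul_le_mul h1 hs.2.2.2.2 (abs_nonneg _) (by linarith)
    -- FTC on each subinterval
    have hftc : ∀ i, i < N → ∫ s in Set.Ioo (y i) (y (i + 1)), d s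
        = D (y (i + 1)) - D (y i) := by
      intro i hi
      refine ftc_lip (d := d) hDlip (hymono (Nat.lt_succ_self i)).le ?_
      filter_upwards [haeP i hi] with s hs
      exact hs.2.2.1
    -- per-interval estimate
    have hper : ∀ i, i < N →
        g (t i) * (D (y (i + 1)) - D (y i)) - (ub i - lb i) * C * Δ
          ≤ ∫ s in Set.Ioo (y i) (y (i + 1)), g s * d s := by
      intro i hi
      have hsplit : (∫ s in Set.Ioo (y i) (y (i + 1)), g s * d s)
          = (∫ s in Set.Ioo (y i) (y (i + 1)), (g s - g (t i)) * d s)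
            + g (t i) * (D (y (i + 1)) - D (y i)) := by
        rw [← hftc i hi, ← integral_const_mul,
          ← integral_add (hint_sub i hi) ((hint_d i hi).const_mul _)]
        congr 1
        funext s
        ring
      have hmono : -((ub i - lb i) * C) * Δ
          ≤ ∫ s in Set.Ioo (y i) (y (i + 1)), (g s - g (t i)) * d s := by
        have haeb : ∀ᵐ s ∂(volume.restrict (Set.Ioo (y i) (y (i + 1)))),
            -((ub i - lb i) * C) ≤ (g s - g (t i)) * d s := by
          filter_upwards [haeP i hi] with s hs
          have h1 := hbd i hi s hs.1 hs.2
          have h2 := hbd i hi (t i) (ht i hi) (hPt i hi)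
          have h3 : |g s - g (t i)| ≤ ub i - lb i :=
            abs_le.mpr ⟨by linarith [h1.1, h2.2], by linarith [h1.2, h2.1]⟩
          have h4 : |(g s - g (t i)) * d s| ≤ (ub i - lb i) * C := by
            rw [abs_mul]
            exact mul_le_mul h3 hs.2.2.2.2 (abs_nonneg _)
              (le_trans (abs_nonneg _) h3)
          linarith [neg_abs_le ((g s - g (t i)) * d s)]
        have := integral_mono_ae (integrableOn_const (C := -((ub i - lb i) * C)) (hfin _ _).ne)
          (hint_sub i hi) haeb
        rw [setIntegral_const, measureReal_def, hvol i, smul_eq_mul] at this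
        linarith [this]
      linarith [hsplit, hmono]
    -- total splitting
    have htotal : ∫ s in Set.Ioo a b, g s * d s
        = ∑ i ∈ Finset.range N, ∫ s in Set.Ioo (y i) (y (i + 1)), g s * d s := by
      have hii : ∀ i, i < N → IntervalIntegrable (fun s => g s * d s) volume (y i) (y (i + 1)) :=
        fun i hi => (intervalIntegrable_iff_integrableOn_Ioo_of_le
          (hymono (Nat.lt_succ_self i)).le).mpr (hint_gd i hi)
      have hadj := intervalIntegral.sum_integral_adjacent_intervals hii
      have e1 : ∫ s in Set.Ioo a b, g s * d s = ∫ s in (y 0)..(y N), g s * d s := by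
        rw [hy0, hyN, intervalIntegral.integral_of_le hab.le, integral_Ioc_eq_integral_Ioo]
      rw [e1, ← hadj]
      refine Finset.sum_congr rfl fun i hi => ?_
      rw [intervalIntegral.integral_of_le (hymono (Nat.lt_succ_self i)).le,
        integral_Ioc_eq_integral_Ioo]
    -- Abel summation nonnegativity
    have habel : 0 ≤ ∑ i ∈ Finset.range N, g (t i) * (D (y (i + 1)) - D (y i)) := by
      have hstep : ∀ m, m + 1 ≤ N →
          g (t m) * D (y (m + 1)) ≤ ∑ i ∈ Finset.range (m + 1),
            g (t i) * (D (y (i + 1)) - D (y i)) := by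
        intro m
        induction m with
        | zero =>
          intro _
          rw [Finset.sum_range_one, hy0, hDa]
          simp
        | succ m ih =>
          intro hm
          have hm' : m + 1 ≤ N := by omega
          have ih' := ih hm'
          rw [Finset.sum_range_succ]
          have hD1 : 0 ≤ D (y (m + 1)) := by
            apply hD0
            constructor
            · rw [← hy0]; exact hymono (Nat.succ_pos m)
            · rw [← hyN]; exact hymono (by omega)
          have hg : g (t (m + 1)) ≤ g (t m) := by
            have h1 : t m < t (m + 1) := lt_trans (ht m (by omega)).2
              (lt_of_le_of_lt (le_refl _) (ht (m + 1) (by omega)).1)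
            exact gpt (t m) (t (m + 1)) (htab m (by omega)) (htab (m + 1) (by omega)) h1
              (hPt m (by omega)) (hPt (m + 1) (by omega))
          nlinarith [ih', hD1, hg]
      have := hstep n (le_refl N)
      rw [hyN, hDb] at this
      simpa using this
    -- oscillation sum
    have hosc : ∑ i ∈ Finset.range N, (ub i - lb i) ≤ 4 * C := by
      have e1 : ∑ i ∈ Finset.range N, ub i = C + ∑ i ∈ Finset.range n, g (t i) := by
        rw [hN, Finset.sum_range_succ']
        have h1 : ∀ i : ℕ, ub (i + 1) = g (t i) := fun i => by simp [hub]
        have h2 : ub 0 = C := by simp [hub]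
        simp only [h1, h2]
        ring
      have e2 : ∑ i ∈ Finset.range N, lb i = (∑ i ∈ Finset.range n, g (t (i + 1))) - C := by
        rw [hN, Finset.sum_range_succ]
        have h1 : lb n = -C := by simp [hlb]
        have h2 : ∑ i ∈ Finset.range n, lb i = ∑ i ∈ Finset.range n, g (t (i + 1)) :=
          Finset.sum_congr rfl fun i hi => by
            rw [Finset.mem_range] at hi
            simp [hlb, Nat.ne_of_lt hi]
        rw [h1, h2]
        ring
      rw [Finset.sum_sub_distrib, e1, e2]
      have e3 : (∑ i ∈ Finset.range n, g (t i)) - ∑ i ∈ Finset.range n, g (t (i + 1))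
          = g (t 0) - g (t n) := by
        rw [← Finset.sum_sub_distrib]
        exact Finset.sum_range_sub' (fun i => g (t i)) n
      have h0 : |g (t 0)| ≤ C := (hPt 0 (by omega)).2.2.1
      have h1 : |g (t n)| ≤ C := (hPt n (by omega)).2.2.1
      rw [abs_le] at h0 h1
      linarith [h0.2, h1.1, e3]
    -- combine
    rw [htotal]
    have hsum : ∑ i ∈ Finset.range N, (g (t i) * (D (y (i + 1)) - D (y i))
          - (ub i - lb i) * C * Δ)
        ≤ ∑ i ∈ Finset.range N, ∫ s in Set.Ioo (y i) (y (i + 1)), g s * d s :=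
      Finset.sum_le_sum fun i hi => hper i (Finset.mem_range.mp hi)
    have hsum2 : ∑ i ∈ Finset.range N, (g (t i) * (D (y (i + 1)) - D (y i))
          - (ub i - lb i) * C * Δ)
        = (∑ i ∈ Finset.range N, g (t i) * (D (y (i + 1)) - D (y i)))
          - (∑ i ∈ Finset.range N, (ub i - lb i)) * C * Δ := by
      rw [Finset.sum_sub_distrib, ← Finset.sum_mul, ← Finset.sum_mul]
    have hfinal : -(4 * C * C * Δ)
        ≤ (∑ i ∈ Finset.range N, g (t i) * (D (y (i + 1)) - D (y i)))
          - (∑ i ∈ Finset.range N, (ub i - lb i)) * C * Δ := by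
      have h5 : (∑ i ∈ Finset.range N, (ub i - lb i)) * C * Δ ≤ 4 * C * C * Δ := by
        apply mul_le_mul_of_nonneg_right _ hΔpos.le
        exact mul_le_mul_of_nonneg_right hosc hC
      linarith [habel, h5]
    have hΔeq : Δ = (b - a) / (n + 1) := by rw [hΔ, hN]; push_cast; ring
    rw [← hΔeq]
    linarith [hsum, hsum2, hfinal]
  -- conclude by letting n → ∞
  have hlim : Tendsto (fun n : ℕ => -(4 * C * C * ((b - a) / (n + 1)))) atTop (nhds 0) := by
    have : Tendsto (fun n : ℕ => ((b - a) / (n + 1))) atTop (nhds 0) := by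
      simpa [div_eq_mul_inv] using Filter.Tendsto.const_mul (b - a) tendsto_one_div_add_atTop_nhds_zero_nat
    have h2 := (this.const_mul (4 * C * C)).neg
    simpa using h2
  exact le_of_tendsto hlim (Filter.Eventually.of_forall key)

end SliceKey


lemma lip_on_closure {Ω : Set (ℝ × ℝ)} (hconv : Convex ℝ Ω) (hΩint : (interior Ω).Nonempty)
    {w : ℝ × ℝ → ℝ} (hcont : ContinuousOn w (closure Ω)) (hconc : ConcaveOn ℝ Ω w)
    (hdiff : ∀ᵐ p ∂(volume.restrict Ω), DifferentiableAt ℝ w p)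
    {C : ℝ} (hC : 0 ≤ C) (hgrad : ∀ p ∈ Ω, DifferentiableAt ℝ w p → ‖fderiv ℝ w p‖ ≤ C) :
    ∀ p ∈ closure Ω, ∀ q ∈ closure Ω, w q ≤ w p + C * dist q p := by
  -- non-differentiability points form a null set inside Ω
  have hnull : volume ({p : ℝ × ℝ | ¬ DifferentiableAt ℝ w p} ∩ Ω) = 0 := by
    have h1 : (volume.restrict Ω) {p : ℝ × ℝ | DifferentiableAt ℝ w p}ᶜ = 0 := by
      have h := ae_iff.mp hdiff
      convert h using 2
      rfl
    have h2 : (volume.restrict Ω) {p : ℝ × ℝ | DifferentiableAt ℝ w p}ᶜ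
        = volume ({p : ℝ × ℝ | DifferentiableAt ℝ w p}ᶜ ∩ Ω) :=
      Measure.restrict_apply (measurableSet_of_differentiableAt ℝ w).compl
    rw [h2] at h1
    exact h1
  -- good points near any closure point
  have hgood : ∀ p ∈ closure Ω, ∀ ε > 0, ∃ r, r ∈ interior Ω ∧
      DifferentiableAt ℝ w r ∧ dist r p < ε := by
    intro p hp ε hε
    obtain ⟨y₀, hy₀⟩ := hΩint
    -- a point of the interior within ε/2 of p
    have hmem : ∀ t : ℝ, t ∈ Set.Ioc (0:ℝ) 1 → p + t • (y₀ - p) ∈ interior Ω := fun t ht =>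
      hconv.add_smul_sub_mem_interior' hp hy₀ ht
    set tt : ℝ := min 1 (ε / (2 * (‖y₀ - p‖ + 1))) with htt
    have httpos : 0 < tt := by
      apply lt_min one_pos
      positivity
    have htt1 : tt ≤ 1 := min_le_left _ _
    set r₀ : ℝ × ℝ := p + tt • (y₀ - p) with hr₀
    have hr₀int : r₀ ∈ interior Ω := hmem tt ⟨httpos, htt1⟩
    have hr₀close : dist r₀ p < ε / 2 := by
      rw [hr₀, dist_eq_norm, add_sub_cancel_left, norm_smul, Real.norm_eq_abs,
        abs_of_pos httpos]
      have h1 : tt ≤ ε / (2 * (‖y₀ - p‖ + 1)) := min_le_right _ _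
      have h2 : tt * ‖y₀ - p‖ ≤ ε / (2 * (‖y₀ - p‖ + 1)) * ‖y₀ - p‖ :=
        mul_le_mul_of_nonneg_right h1 (norm_nonneg _)
      have h3 : ε / (2 * (‖y₀ - p‖ + 1)) * ‖y₀ - p‖ < ε / 2 := by
        rw [div_mul_eq_mul_div, div_lt_div_iff₀ (by positivity) (by positivity)]
        nlinarith [norm_nonneg (y₀ - p)]
      linarith
    -- a differentiability point in a small ball inside the interior
    obtain ⟨δ, hδpos, hδball⟩ := Metric.isOpen_iff.mp isOpen_interior r₀ hr₀int
    set δ' : ℝ := min δ (ε / 2) with hδ'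
    have hδ'pos : 0 < δ' := lt_min hδpos (by linarith)
    have hball : Metric.ball r₀ δ' ⊆ interior Ω :=
      Set.Subset.trans (Metric.ball_subset_ball (min_le_left _ _)) hδball
    have : ∃ r ∈ Metric.ball r₀ δ', DifferentiableAt ℝ w r := by
      by_contra hcon
      push_neg at hcon
      have hsubnull : Metric.ball r₀ δ' ⊆ {p : ℝ × ℝ | ¬ DifferentiableAt ℝ w p} ∩ Ω :=
        fun x hx => ⟨hcon x hx, interior_subset (hball hx)⟩
      have := measure_mono_null hsubnull hnull
      exact absurd this (Metric.measure_ball_pos volume r₀ hδ'pos).ne'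
    obtain ⟨r, hrball, hrdiff⟩ := this
    refine ⟨r, hball hrball, hrdiff, ?_⟩
    calc dist r p ≤ dist r r₀ + dist r₀ p := dist_triangle _ _ _
      _ < δ' + ε / 2 := add_lt_add (Metric.mem_ball.mp hrball) hr₀close
      _ ≤ ε / 2 + ε / 2 := by
          have := min_le_right δ (ε / 2)
          linarith [this]
      _ = ε := by ring
  -- supergradient inequality at differentiability points
  have hsuper : ∀ r, r ∈ Ω → DifferentiableAt ℝ w r → ∀ z ∈ Ω,
      w z ≤ w r + C * dist z r := by
    intro r hr hrd z hz
    set φ : ℝ → ℝ := w ∘ (AffineMap.lineMap r z) with hφ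
    have hφconc : ConcaveOn ℝ (Set.Icc (0:ℝ) 1) φ := by
      refine ((hconc.comp_affineMap (AffineMap.lineMap r z)).subset ?_ (convex_Icc 0 1))
      intro s hs
      exact hconv.lineMap_mem hr hz hs
    have hd : HasDerivAt φ (fderiv ℝ w r (z - r)) 0 := by
      have h1 : HasDerivAt (fun s : ℝ => (AffineMap.lineMap r z : ℝ →ᵃ[ℝ] ℝ × ℝ) s)
          (z - r) 0 := AffineMap.hasDerivAt_lineMap
      have h0 : ((AffineMap.lineMap r z : ℝ →ᵃ[ℝ] ℝ × ℝ)) (0:ℝ) = r := by simp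
      have hF : HasFDerivAt w (fderiv ℝ w r) ((AffineMap.lineMap r z : ℝ →ᵃ[ℝ] ℝ × ℝ) (0:ℝ)) := by
        rw [h0]; exact hrd.hasFDerivAt
      exact hF.comp_hasDerivAt (0:ℝ) h1
    have hslope := hφconc.slope_le_of_hasDerivAt
      (Set.left_mem_Icc.mpr zero_le_one) (Set.right_mem_Icc.mpr zero_le_one) one_pos hd
    have hslope_eq : slope φ 0 1 = w z - w r := by
      rw [slope_def_field]
      simp [hφ]
    rw [hslope_eq] at hslope
    have hb : fderiv ℝ w r (z - r) ≤ C * dist z r := by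
      calc fderiv ℝ w r (z - r) ≤ ‖fderiv ℝ w r (z - r)‖ := le_abs_self _
        _ ≤ ‖fderiv ℝ w r‖ * ‖z - r‖ := (fderiv ℝ w r).le_opNorm _
        _ ≤ C * ‖z - r‖ := mul_le_mul_of_nonneg_right (hgrad r hr hrd) (norm_nonneg _)
        _ = C * dist z r := by rw [dist_eq_norm]
    linarith
  -- limit step 1 : p in the closure, z in Ω
  have hstep1 : ∀ p ∈ closure Ω, ∀ z ∈ Ω, w z ≤ w p + C * dist z p := by
    intro p hp z hz
    have hseq : ∀ n : ℕ, ∃ r, r ∈ interior Ω ∧ DifferentiableAt ℝ w r ∧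
        dist r p < 1 / (n + 1) := fun n => hgood p hp _ (by positivity)
    choose r hrint hrdiff hrdist using hseq
    have hrp : Tendsto r atTop (nhds p) := by
      rw [tendsto_iff_dist_tendsto_zero]
      apply squeeze_zero (fun n => dist_nonneg)
        (fun n => (hrdist n).le)
      exact tendsto_one_div_add_atTop_nhds_zero_nat
    have hrpc : Tendsto r atTop (nhdsWithin p (closure Ω)) :=
      tendsto_nhdsWithin_of_tendsto_nhds_of_eventually_within _ hrp
        (Filter.Eventually.of_forall fun n => interior_subset_closure (hrint n))
    have hwr : Tendsto (fun n => w (r n)) atTop (nhds (w p)) :=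
      ((hcont p hp).tendsto).comp hrpc
    have hdist : Tendsto (fun n => w (r n) + C * dist z (r n)) atTop
        (nhds (w p + C * dist z p)) :=
      hwr.add ((tendsto_const_nhds.dist hrp).const_mul C)
    refine le_of_tendsto_of_tendsto tendsto_const_nhds hdist ?_
    exact Filter.Eventually.of_forall fun n =>
      hsuper (r n) (interior_subset (hrint n)) (hrdiff n) z hz
  -- limit step 2 : both in the closure
  intro p hp q hq
  have hseq : ∀ n : ℕ, ∃ r, r ∈ interior Ω ∧ DifferentiableAt ℝ w r ∧
      dist r q < 1 / (n + 1) := fun n => hgood q hq _ (by positivity)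
  choose z hzint hzdiff hzdist using hseq
  have hzq : Tendsto z atTop (nhds q) := by
    rw [tendsto_iff_dist_tendsto_zero]
    apply squeeze_zero (fun n => dist_nonneg) (fun n => (hzdist n).le)
    exact tendsto_one_div_add_atTop_nhds_zero_nat
  have hzqc : Tendsto z atTop (nhdsWithin q (closure Ω)) :=
    tendsto_nhdsWithin_of_tendsto_nhds_of_eventually_within _ hzq
      (Filter.Eventually.of_forall fun n => interior_subset_closure (hzint n))
  have hwz : Tendsto (fun n => w (z n)) atTop (nhds (w q)) :=
    ((hcont q hq).tendsto).comp hzqc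
  have hrhs : Tendsto (fun n => w p + C * dist (z n) p) atTop
      (nhds (w p + C * dist q p)) :=
    tendsto_const_nhds.add ((hzq.dist tendsto_const_nhds).const_mul C)
  refine le_of_tendsto_of_tendsto hwz hrhs ?_
  exact Filter.Eventually.of_forall fun n =>
    hstep1 p hp (z n) (interior_subset (hzint n))


lemma concaveOn_congr_on {s : Set ℝ} {f g : ℝ → ℝ} (hf : ConcaveOn ℝ s f)
    (h : ∀ x ∈ s, f x = g x) : ConcaveOn ℝ s g := by
  refine ⟨hf.1, fun x hx y hy a b ha hb hab => ?_⟩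
  rw [← h _ (hf.1 hx hy ha hb hab), ← h _ hx, ← h _ hy]
  exact hf.2 hx hy ha hb hab

lemma open_convex_eq_Ioo (S : Set ℝ) (ho : IsOpen S) (hc : Convex ℝ S) (hne : S.Nonempty)
    (hbdd : ∃ R, ∀ y ∈ S, |y| ≤ R) : S = Set.Ioo (sInf S) (sSup S) := by
  obtain ⟨R, hR⟩ := hbdd
  have hbb : BddBelow S := ⟨-R, fun y hy => by
    have := abs_le.mp (hR y hy); linarith [this.1]⟩
  have hba : BddAbove S := ⟨R, fun y hy => (abs_le.mp (hR y hy)).2⟩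
  ext s
  constructor
  · intro hs
    obtain ⟨ε, hε, hball⟩ := Metric.isOpen_iff.mp ho s hs
    have h1 : s - ε / 2 ∈ S := hball (by
      rw [Metric.mem_ball, Real.dist_eq]
      rw [show s - ε / 2 - s = -(ε / 2) by ring, abs_neg, abs_of_pos (by linarith)]
      linarith)
    have h2 : s + ε / 2 ∈ S := hball (by
      rw [Metric.mem_ball, Real.dist_eq]
      rw [show s + ε / 2 - s = ε / 2 by ring, abs_of_pos (by linarith)]
      linarith)
    exact ⟨lt_of_le_of_lt (csInf_le hbb h1) (by linarith),
      lt_of_lt_of_le (by linarith) (le_csSup hba h2)⟩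
  · intro hs
    obtain ⟨s₁, hs₁S, hs₁⟩ := exists_lt_of_csInf_lt hne hs.1
    obtain ⟨s₂, hs₂S, hs₂⟩ := exists_lt_of_lt_csSup hne hs.2
    exact hc.ordConnected.out hs₁S hs₂S ⟨hs₁.le, hs₂.le⟩

/-- If `u ∈ U_Ω` attains its maximum value `1` at `ξ₀` and `ũ` is the smallest function
in `U_Ω` with `ũ(ξ₀) = 1`, then `∫_Ω u_y² ≥ ∫_Ω ũ_y²`. -/
theorem stmt15 (Ω : Set (ℝ × ℝ)) (hconv : Convex ℝ Ω) (hbdd : Bornology.IsBounded Ω)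
    (hint : (interior Ω).Nonempty)
    (u : ℝ × ℝ → ℝ) (hu : MemU Ω u) (ξ₀ : ℝ × ℝ) (hξ₀ : ξ₀ ∈ Ω)
    (hu1 : u ξ₀ = 1) (hule : ∀ p ∈ Ω, u p ≤ 1)
    (v : ℝ × ℝ → ℝ) (hv : MemU Ω v) (hv1 : v ξ₀ = 1)
    (hmin : ∀ w : ℝ × ℝ → ℝ, MemU Ω w → w ξ₀ = 1 → ∀ p ∈ Ω, v p ≤ w p) :
    (∫ p in Ω, (uY v p) ^ 2) ≤ ∫ p in Ω, (uY u p) ^ 2 := by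
  classical
  -- constants
  obtain ⟨Cu, hCu⟩ := hu.2.2.2.1
  obtain ⟨Cv, hCv⟩ := hv.2.2.2.1
  set C : ℝ := max (max Cu Cv) 1 with hCdef
  have hC1 : (1:ℝ) ≤ C := le_max_right _ _
  have hC : (0:ℝ) ≤ C := by linarith
  have hgradu : ∀ p ∈ Ω, DifferentiableAt ℝ u p → ‖fderiv ℝ u p‖ ≤ C := fun p hp hd =>
    (hCu p hp hd).trans ((le_max_left Cu Cv).trans (le_max_left _ _))
  have hgradv : ∀ p ∈ Ω, DifferentiableAt ℝ v p → ‖fderiv ℝ v p‖ ≤ C := fun p hp hd =>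
    (hCv p hp hd).trans ((le_max_right Cu Cv).trans (le_max_left _ _))
  have hvleu : ∀ p ∈ Ω, v p ≤ u p := hmin u hu hu1
  -- Lipschitz bounds on the closure
  have hlipu := lip_on_closure hconv hint hu.1 hu.2.1 hu.2.2.1 hC hgradu
  have hlipv := lip_on_closure hconv hint hv.1 hv.2.1 hv.2.2.1 hC hgradv
  set U : Set (ℝ × ℝ) := interior Ω with hUdef
  have hUopen : IsOpen U := isOpen_interior
  have hUmeas : MeasurableSet U := hUopen.measurableSet
  have hUsub : U ⊆ Ω := interior_subset
  have hUclos : U ⊆ closure Ω := fun p hp => subset_closure (hUsub hp)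
  have hUconv : Convex ℝ U := hconv.interior
  -- measurability of the derivatives
  have hmu : Measurable (uY u) := by
    unfold uY; exact measurable_fderiv_apply_const ℝ u ((0:ℝ), (1:ℝ))
  have hmv : Measurable (uY v) := by
    unfold uY; exact measurable_fderiv_apply_const ℝ v ((0:ℝ), (1:ℝ))
  -- pointwise bound on |uY|
  have hnorm01 : ‖(((0:ℝ), (1:ℝ)) : ℝ × ℝ)‖ = 1 := by
    rw [Prod.norm_def]; simp
  have habs : ∀ (w : ℝ × ℝ → ℝ), (∀ p ∈ Ω, DifferentiableAt ℝ w p → ‖fderiv ℝ w p‖ ≤ C) →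
      ∀ p ∈ Ω, DifferentiableAt ℝ w p → |uY w p| ≤ C := by
    intro w hg p hp hd
    calc |uY w p| = ‖fderiv ℝ w p ((0:ℝ), (1:ℝ))‖ := rfl
      _ ≤ ‖fderiv ℝ w p‖ * ‖(((0:ℝ), (1:ℝ)) : ℝ × ℝ)‖ := (fderiv ℝ w p).le_opNorm _
      _ = ‖fderiv ℝ w p‖ := by rw [hnorm01, mul_one]
      _ ≤ C := hg p hp hd
  -- replace Ω by its interior in both integrals
  have hfr : volume (frontier Ω) = 0 := hconv.addHaar_frontier volume
  have haeeq : Ω =ᵐ[volume] U := by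
    rw [MeasureTheory.ae_eq_set]
    constructor
    · refine measure_mono_null (fun p hp => ?_) hfr
      exact ⟨subset_closure hp.1, hp.2⟩
    · have he : U \ Ω = ∅ := by
        ext p
        simp only [Set.mem_diff, Set.mem_empty_iff_false, iff_false, not_and, not_not]
        exact fun hp => hUsub hp
      rw [he]; exact measure_empty
  rw [setIntegral_congr_set haeeq, setIntegral_congr_set haeeq]
  -- a.e. differentiability on U
  have haeU : ∀ᵐ p ∂(volume.restrict U), DifferentiableAt ℝ u p ∧ DifferentiableAt ℝ v p :=
    (ae_restrict_of_ae_restrict_of_subset hUsub hu.2.2.1).and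
      (ae_restrict_of_ae_restrict_of_subset hUsub hv.2.2.1)
  -- finiteness of the measure of U
  have hUfin : volume U < ⊤ := by
    exact lt_of_le_of_lt (measure_mono subset_closure)
      (hbdd.subset hUsub).isCompact_closure.measure_lt_top
  -- integrability helper
  have hintU : ∀ (f : ℝ × ℝ → ℝ) (M : ℝ), Measurable f →
      (∀ᵐ p ∂(volume.restrict U), |f p| ≤ M) → IntegrableOn f U volume := by
    intro f M hm hb
    refine Integrable.mono' (g := fun _ => M) (integrableOn_const hUfin.ne)
      hm.aestronglyMeasurable ?_
    filter_upwards [hb] with p hp using hp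
  have haeabs : ∀ᵐ p ∂(volume.restrict U), |uY u p| ≤ C ∧ |uY v p| ≤ C := by
    filter_upwards [haeU, ae_restrict_mem hUmeas] with p hd hpU
    exact ⟨habs u hgradu p (hUsub hpU) hd.1, habs v hgradv p (hUsub hpU) hd.2⟩
  have hIu : IntegrableOn (fun p => (uY u p) ^ 2) U volume := by
    refine hintU _ (C ^ 2) (hmu.pow_const 2) ?_
    filter_upwards [haeabs] with p hp
    rw [abs_pow]
    exact pow_le_pow_left₀ (abs_nonneg _) hp.1 2
  have hIv : IntegrableOn (fun p => (uY v p) ^ 2) U volume := by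
    refine hintU _ (C ^ 2) (hmv.pow_const 2) ?_
    filter_upwards [haeabs] with p hp
    rw [abs_pow]
    exact pow_le_pow_left₀ (abs_nonneg _) hp.2 2
  set f : ℝ × ℝ → ℝ := fun p => uY v p * (uY u p - uY v p) with hfdef
  have hfm : Measurable f := hmv.mul (hmu.sub hmv)
  have hIf : IntegrableOn f U volume := by
    refine hintU _ (C * (C + C)) hfm ?_
    filter_upwards [haeabs] with p hp
    rw [hfdef, abs_mul]
    refine mul_le_mul hp.2 ?_ (abs_nonneg _) hC
    calc |uY u p - uY v p| ≤ |uY u p| + |uY v p| := abs_sub _ _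
      _ ≤ C + C := add_le_add hp.1 hp.2
  -- THE KEY: Fubini + 1-dimensional estimate
  have hkey : 0 ≤ ∫ p in U, f p := by
    have hiprod : Integrable (U.indicator f) (volume.prod volume) := by
      rw [← Measure.volume_eq_prod]
      exact (integrable_indicator_iff hUmeas).mpr hIf
    have heq1 : ∫ p in U, f p = ∫ x : ℝ, (∫ yy : ℝ, U.indicator f (x, yy)) := by
      rw [← integral_indicator hUmeas,
        Measure.volume_eq_prod ℝ ℝ]
      exact integral_prod _ hiprod
    rw [heq1]
    apply integral_nonneg_of_ae
    have hprodae0 : ∀ᵐ p ∂(volume : Measure (ℝ × ℝ)), p ∈ U →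
        DifferentiableAt ℝ u p ∧ DifferentiableAt ℝ v p := (ae_restrict_iff' hUmeas).mp haeU
    have hprodae : ∀ᵐ q ∂(volume.prod volume), q ∈ U →
        DifferentiableAt ℝ u q ∧ DifferentiableAt ℝ v q := by
      rw [← Measure.volume_eq_prod]; exact hprodae0
    filter_upwards [Measure.ae_ae_of_ae_prod hprodae] with x hx
    -- the slice at abscissa x
    set S : Set ℝ := {yy : ℝ | (x, yy) ∈ U} with hSdef
    have hSopen : IsOpen S := hUopen.preimage (Continuous.prodMk_right x)
    have hSmeas : MeasurableSet S := hSopen.measurableSet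
    have hind : (fun yy => U.indicator f (x, yy)) = S.indicator (fun yy => f (x, yy)) := by
      funext yy
      by_cases h : (x, yy) ∈ U
      · rw [Set.indicator_of_mem h, Set.indicator_of_mem (by exact h)]
      · rw [Set.indicator_of_notMem h, Set.indicator_of_notMem (by exact h)]
    rw [hind, integral_indicator hSmeas]
    rcases Set.eq_empty_or_nonempty S with hSe | hSne
    · rw [hSe]; simp
    have hSconv : Convex ℝ S := by
      intro y₁ h₁ y₂ h₂ aa bb ha hb hab
      have hcomb := hUconv h₁ h₂ ha hb hab
      have heqq : aa • ((x, y₁) : ℝ × ℝ) + bb • ((x, y₂) : ℝ × ℝ)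
          = ((x : ℝ), aa • y₁ + bb • y₂) := by
        have : aa * x + bb * x = x := by rw [← add_mul, hab, one_mul]
        simp only [Prod.smul_mk, Prod.mk_add_mk, smul_eq_mul]
        rw [this]
      rw [heqq] at hcomb
      exact hcomb
    obtain ⟨R, hR⟩ := isBounded_iff_forall_norm_le.mp hbdd
    have hSbdd : ∀ yy ∈ S, |yy| ≤ R := by
      intro yy hyy
      have h1 := hR _ (hUsub hyy)
      have h2 : |yy| ≤ ‖((x, yy) : ℝ × ℝ)‖ := by
        rw [Prod.norm_def]
        exact le_trans (le_of_eq (Real.norm_eq_abs yy).symm) (le_max_right _ _)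
      linarith
    set A : ℝ := sInf S with hAdef
    set B : ℝ := sSup S with hBdef
    have hSeq : S = Set.Ioo A B := open_convex_eq_Ioo S hSopen hSconv hSne ⟨R, hSbdd⟩
    have hAB : A < B := by
      obtain ⟨s0, hs0⟩ := hSne
      rw [hSeq] at hs0
      exact lt_trans hs0.1 hs0.2
    -- boundary membership
    have hincl : ∀ yy ∈ Set.Icc A B, ((x, yy) : ℝ × ℝ) ∈ closure Ω := by
      intro yy hyy
      have h1 : yy ∈ closure S := by rw [hSeq, closure_Ioo hAB.ne]; exact hyy
      have hmc : Continuous (fun z : ℝ => ((x, z) : ℝ × ℝ)) := Continuous.prodMk_right x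
      have h2 : ((x, yy) : ℝ × ℝ) ∈ closure ((fun z : ℝ => ((x, z) : ℝ × ℝ)) '' S) :=
        image_closure_subset_closure_image hmc ⟨yy, h1, rfl⟩
      have h3 : (fun z : ℝ => ((x, z) : ℝ × ℝ)) '' S ⊆ closure Ω := by
        rintro q ⟨z, hz, rfl⟩
        exact hUclos hz
      have h4 := closure_mono h3 h2
      rwa [closure_closure] at h4
    have hfrA : ((x, A) : ℝ × ℝ) ∈ frontier Ω := by
      refine ⟨hincl A ⟨le_refl A, hAB.le⟩, fun hmem => ?_⟩
      have : A ∈ S := hmem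
      rw [hSeq] at this
      exact lt_irrefl A this.1
    have hfrB : ((x, B) : ℝ × ℝ) ∈ frontier Ω := by
      refine ⟨hincl B ⟨hAB.le, le_refl B⟩, fun hmem => ?_⟩
      have : B ∈ S := hmem
      rw [hSeq] at this
      exact lt_irrefl B this.2
    -- the clamp function
    set cl : ℝ → ℝ := fun yy => max A (min B yy) with hcl
    have hclIcc : ∀ yy, cl yy ∈ Set.Icc A B :=
      fun yy => ⟨le_max_left _ _, max_le hAB.le (min_le_left _ _)⟩
    have hclid : ∀ yy ∈ Set.Ioo A B, cl yy = yy := by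
      intro yy hyy
      rw [hcl]
      simp only []
      rw [min_eq_right hyy.2.le, max_eq_right hyy.1.le]
    have hclA : cl A = A := by
      rw [hcl]; simp only []
      rw [min_eq_right hAB.le, max_self]
    have hclB : cl B = B := by
      rw [hcl]; simp only []
      rw [min_self, max_eq_right hAB.le]
    have hcllip : ∀ y z : ℝ, |cl y - cl z| ≤ |y - z| := by
      intro y z
      have h1 : |cl y - cl z| ≤ |min B y - min B z| :=
        le_trans (abs_max_sub_max_le_max A (min B y) A (min B z))
          (max_le (by rw [sub_self, abs_zero]; exact abs_nonneg _) (le_refl _))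
      have h2 : |min B y - min B z| ≤ |y - z| :=
        le_trans (abs_min_sub_min_le_max B y B z)
          (max_le (by rw [sub_self, abs_zero]; exact abs_nonneg _) (le_refl _))
      exact h1.trans h2
    have hdistcl : ∀ y z : ℝ, dist (((x, cl y)) : ℝ × ℝ) ((x, cl z)) ≤ |y - z| := by
      intro y z
      rw [Prod.dist_eq]
      simp only [dist_self]
      rw [max_eq_right dist_nonneg, Real.dist_eq]
      exact hcllip y z
    have hclmem : ∀ y : ℝ, ((x, cl y) : ℝ × ℝ) ∈ closure Ω := fun y => hincl _ (hclIcc y)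
    -- Lipschitz slice functions
    have habs2 : ∀ (w : ℝ × ℝ → ℝ),
        (∀ p ∈ closure Ω, ∀ q ∈ closure Ω, w q ≤ w p + C * dist q p) →
        ∀ y z : ℝ, |w (x, cl y) - w (x, cl z)| ≤ C * |y - z| := by
      intro w hlip y z
      rw [abs_sub_le_iff]
      constructor
      · have := hlip (x, cl z) (hclmem z) (x, cl y) (hclmem y)
        have h2 := mul_le_mul_of_nonneg_left (hdistcl y z) hC
        linarith
      · have := hlip (x, cl y) (hclmem y) (x, cl z) (hclmem z)
        have h2 := mul_le_mul_of_nonneg_left (hdistcl z y) hC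
        rw [abs_sub_comm] at h2
        linarith
    set G : ℝ → ℝ := fun yy => v (x, cl yy) with hGdef
    set Df : ℝ → ℝ := fun yy => u (x, cl yy) - v (x, cl yy) with hDdef
    set K : NNReal := Real.toNNReal (2 * C) with hKdef
    have hKC : (K : ℝ) = 2 * C := Real.coe_toNNReal _ (by linarith)
    have hGlip : LipschitzWith K G := by
      apply LipschitzWith.of_dist_le_mul
      intro y z
      rw [Real.dist_eq (x := G y), Real.dist_eq, hKC]
      calc |G y - G z| ≤ C * |y - z| := habs2 v hlipv y z
        _ ≤ 2 * C * |y - z| := by nlinarith [abs_nonneg (y - z)]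
    have hDlip : LipschitzWith K Df := by
      apply LipschitzWith.of_dist_le_mul
      intro y z
      rw [Real.dist_eq (x := Df y), Real.dist_eq, hKC]
      have h1 := habs2 u hlipu y z
      have h2 := habs2 v hlipv y z
      calc |Df y - Df z| = |(u (x, cl y) - u (x, cl z)) - (v (x, cl y) - v (x, cl z))| := by
            rw [hDdef]; ring_nf
        _ ≤ |u (x, cl y) - u (x, cl z)| + |v (x, cl y) - v (x, cl z)| := abs_sub _ _
        _ ≤ C * |y - z| + C * |y - z| := add_le_add h1 h2
        _ = 2 * C * |y - z| := by ring
    -- concavity of G on the slice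
    have hGconc : ConcaveOn ℝ (Set.Ioo A B) G := by
      have hmline : ∀ z : ℝ,
          (AffineMap.lineMap ((x, (0:ℝ)) : ℝ × ℝ) ((x, (1:ℝ)) : ℝ × ℝ)) z = ((x, z) : ℝ × ℝ) := by
        intro z
        rw [AffineMap.lineMap_apply]
        simp [Prod.ext_iff]
      have haff : ConcaveOn ℝ (Set.Ioo A B) (fun yy : ℝ => v (x, yy)) := by
        have h1 := (hv.2.1.comp_affineMap
          (AffineMap.lineMap ((x, (0:ℝ)) : ℝ × ℝ) ((x, (1:ℝ)) : ℝ × ℝ)))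
        have h2 : Set.Ioo A B ⊆ (AffineMap.lineMap ((x, (0:ℝ)) : ℝ × ℝ)
            ((x, (1:ℝ)) : ℝ × ℝ)) ⁻¹' Ω := by
          intro z hz
          rw [Set.mem_preimage, hmline z]
          rw [← hSeq] at hz
          exact hUsub hz
        have h3 := (h1.subset h2 (convex_Ioo A B))
        refine concaveOn_congr_on h3 ?_
        intro z _
        rw [Function.comp_apply, hmline z]
      refine concaveOn_congr_on haff ?_
      intro z hz
      rw [hGdef]
      simp only []
      rw [hclid z hz]
    -- boundary values and nonnegativity of Df
    have hDA : Df A = 0 := by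
      rw [hDdef]
      simp only []
      rw [hclA, hu.2.2.2.2 _ hfrA, hv.2.2.2.2 _ hfrA, sub_zero]
    have hDB : Df B = 0 := by
      rw [hDdef]
      simp only []
      rw [hclB, hu.2.2.2.2 _ hfrB, hv.2.2.2.2 _ hfrB, sub_zero]
    have hD0 : ∀ yy ∈ Set.Ioo A B, 0 ≤ Df yy := by
      intro yy hyy
      rw [hDdef]
      simp only []
      rw [hclid yy hyy]
      have : ((x, yy) : ℝ × ℝ) ∈ Ω := hUsub (by rw [← hSeq] at hyy; exact hyy)
      linarith [hvleu _ this]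
    -- slice derivative functions
    set g : ℝ → ℝ := fun yy => uY v (x, yy) with hgdef
    set d : ℝ → ℝ := fun yy => uY u (x, yy) - uY v (x, yy) with hddef
    have hgm : Measurable g := by
      rw [hgdef]
      unfold uY
      exact (measurable_fderiv_apply_const ℝ v ((0:ℝ), (1:ℝ))).comp measurable_prodMk_left
    have hdm : Measurable d := by
      rw [hddef]
      unfold uY
      exact ((measurable_fderiv_apply_const ℝ u ((0:ℝ), (1:ℝ))).comp
        measurable_prodMk_left).sub
        ((measurable_fderiv_apply_const ℝ v ((0:ℝ), (1:ℝ))).comp measurable_prodMk_left)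
    -- a.e. hypotheses of the 1-D lemma
    have hae_slice : ∀ᵐ yy ∂(volume.restrict (Set.Ioo A B)),
        HasDerivAt G (g yy) yy ∧ HasDerivAt Df (d yy) yy ∧ |g yy| ≤ 2 * C ∧ |d yy| ≤ 2 * C := by
      rw [ae_restrict_iff' measurableSet_Ioo]
      filter_upwards [hx] with yy h2 hyy
      have hyyS : yy ∈ S := by rw [hSeq]; exact hyy
      have hyyU : ((x, yy) : ℝ × ℝ) ∈ U := hyyS
      obtain ⟨hdu, hdv⟩ := h2 hyyU
      have hcurve : HasDerivAt (fun z : ℝ => ((x, z) : ℝ × ℝ)) (((0:ℝ), (1:ℝ))) yy :=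
        (hasDerivAt_const yy x).prodMk (hasDerivAt_id yy)
      have hv1 : HasDerivAt (fun z : ℝ => v (x, z)) (uY v (x, yy)) yy :=
        hdv.hasFDerivAt.comp_hasDerivAt yy hcurve
      have hu1 : HasDerivAt (fun z : ℝ => u (x, z)) (uY u (x, yy)) yy :=
        hdu.hasFDerivAt.comp_hasDerivAt yy hcurve
      have heventv : G =ᶠ[nhds yy] (fun z : ℝ => v (x, z)) := by
        filter_upwards [Ioo_mem_nhds hyy.1 hyy.2] with z hz
        rw [hGdef]
        simp only []
        rw [hclid z hz]
      have heventd : Df =ᶠ[nhds yy] (fun z : ℝ => u (x, z) - v (x, z)) := by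
        filter_upwards [Ioo_mem_nhds hyy.1 hyy.2] with z hz
        rw [hDdef]
        simp only []
        rw [hclid z hz]
      refine ⟨hv1.congr_of_eventuallyEq heventv, (hu1.sub hv1).congr_of_eventuallyEq heventd,
        ?_, ?_⟩
      · have := habs v hgradv _ (hUsub hyyU) hdv
        rw [hgdef]
        simp only []
        linarith [abs_nonneg (uY v (x, yy))]
      · have h1 := habs u hgradu _ (hUsub hyyU) hdu
        have h2 := habs v hgradv _ (hUsub hyyU) hdv
        rw [hddef]
        simp only []
        calc |uY u (x, yy) - uY v (x, yy)| ≤ |uY u (x, yy)| + |uY v (x, yy)| := abs_sub _ _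
          _ ≤ 2 * C := by linarith
    have hfinal := slice_key (C := 2 * C) (by linarith) hGlip hDlip hAB hGconc hD0 hDA hDB
      hgm hdm hae_slice
    rw [hSeq]
    have : (fun yy => f (x, yy)) = fun yy => g yy * d yy := rfl
    rw [show (∫ yy in Set.Ioo A B, f (x, yy)) = ∫ yy in Set.Ioo A B, g yy * d yy from rfl]
    exact hfinal
  -- conclude
  have hptw : ∀ p : ℝ × ℝ, 2 * f p ≤ (uY u p) ^ 2 - (uY v p) ^ 2 := by
    intro p
    simp only [hfdef]
    nlinarith [sq_nonneg (uY u p - uY v p)]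
  have h2 : ∫ p in U, 2 * f p ≤ ∫ p in U, ((uY u p) ^ 2 - (uY v p) ^ 2) := by
    apply integral_mono_ae (hIf.const_mul 2) (hIu.sub hIv)
    exact Filter.Eventually.of_forall hptw
  rw [integral_sub hIu hIv] at h2
  have h3 : (0:ℝ) ≤ ∫ p in U, 2 * f p := by
    rw [integral_const_mul]
    linarith [hkey]
  linarith [h2, h3]
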